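/- Let A be a commutative ring and B a finitely presented commutative A-algebra. Let μ: B ⊗_A B → B be the multiplication map and J = ker μ. Then the 0th Fitting ideal of the B-module of Kähler differentials satisfies the inclusion F₀(Ω_{B/A}) ⊆ μ(Ann(J)) as ideals of B. -/

import Mathlib

open TensorProduct

/-- The 0-th Fitting ideal of a module `M` over `R`: for a finitely presented module it is
the ideal generated by the `n × n` minors of a relation matrix of any presentation of `M`
with `n` generators; equivalently (by Fitting's lemma, which guarantees independence of the
presentation) the ideal generated by the determinants of all `n × n` matrices whose rows are
relations among the `n` generators.  We take the supremum over all finite presentations. -/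
noncomputable def fittingIdeal0 (R M : Type*) [CommRing R] [AddCommGroup M] [Module R M] :
    Ideal R :=
  ⨆ (n : ℕ) (f : (Fin n → R) →ₗ[R] M) (_ : Function.Surjective f),
    Ideal.span { d : R | ∃ P : Matrix (Fin n) (Fin n) R,
      (∀ i, P i ∈ LinearMap.ker f) ∧ d = P.det }

/-- Determinant trick: if `P' *ᵥ y = U *ᵥ t` and `(1 - V) *ᵥ t = C *ᵥ y`, then
`det ((1-V).det • P' - U * (1-V).adjugate * C) * (1-V).det` kills every `t k`. -/
lemma det_trick_ann {R : Type*} [CommRing R] {n m : ℕ}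
    (y : Fin n → R) (t : Fin m → R)
    (P' : Matrix (Fin n) (Fin n) R) (U : Matrix (Fin n) (Fin m) R)
    (C : Matrix (Fin m) (Fin n) R) (V : Matrix (Fin m) (Fin m) R)
    (hPy : P'.mulVec y = U.mulVec t)
    (htE : (1 - V).mulVec t = C.mulVec y) :
    ∀ k, (((1 - V).det • P' - U * ((1 - V).adjugate * C)).det * (1 - V).det) * t k = 0 := by
  set E : Matrix (Fin m) (Fin m) R := 1 - V with hE
  set M : Matrix (Fin n) (Fin n) R := E.det • P' - U * (E.adjugate * C) with hM
  have h1 : E.det • t = (E.adjugate * C).mulVec y := by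
    rw [← Matrix.mulVec_mulVec, ← htE, Matrix.mulVec_mulVec, Matrix.adjugate_mul,
      Matrix.smul_mulVec, Matrix.one_mulVec]
  have h2 : M.mulVec y = 0 := by
    rw [hM, Matrix.sub_mulVec, Matrix.smul_mulVec, hPy,
      ← Matrix.mulVec_mulVec, ← h1, Matrix.mulVec_smul, sub_self]
  have h3 : M.det • y = 0 := by
    have := congrArg (M.adjugate.mulVec) h2
    rwa [Matrix.mulVec_mulVec, Matrix.adjugate_mul, Matrix.smul_mulVec,
      Matrix.one_mulVec, Matrix.mulVec_zero] at this
  have h4 : (M.det * E.det) • t = 0 := by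
    rw [mul_smul, h1, ← Matrix.mulVec_smul, h3, Matrix.mulVec_zero]
  intro k
  have := congrFun h4 k
  simpa [mul_assoc] using this

/-- Let `B` be a finitely presented commutative `A`-algebra,
`μ : B ⊗[A] B → B` the multiplication map and `J = ker μ`.  Then the 0-th Fitting ideal of
the `B`-module of Kähler differentials satisfies `F₀(Ω[B⁄A]) ⊆ μ(Ann J)` as ideals of `B`. -/
theorem fittingIdeal_kaehler_le_map_annihilator
    (A B : Type*) [CommRing A] [CommRing B] [Algebra A B]
    [Algebra.FinitePresentation A B] :
    fittingIdeal0 B (Ω[B⁄A]) ≤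
      Ideal.map (Algebra.TensorProduct.lmul' A : B ⊗[A] B →ₐ[A] B)
        (RingHom.ker (Algebra.TensorProduct.lmul' A : B ⊗[A] B →ₐ[A] B)).annihilator := by
  classical
  have hfpR : Algebra.FinitePresentation A (B ⊗[A] B) :=
    Algebra.FinitePresentation.trans A B (B ⊗[A] B)
  set R := B ⊗[A] B with hR
  set μ : B ⊗[A] B →ₐ[A] B := Algebra.TensorProduct.lmul' A with hμdef
  have hμab : ∀ b : B, μ (algebraMap B R b) = b := by
    intro b
    show μ (b ⊗ₜ 1) = b
    rw [hμdef, Algebra.TensorProduct.lmul'_apply_tmul, mul_one]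
  have hμsurj : Function.Surjective μ := fun b => ⟨algebraMap B R b, hμab b⟩
  set J : Ideal R := KaehlerDifferential.ideal A B with hJ
  have hJker : J = RingHom.ker μ := rfl
  have hJfg : J.FG := Algebra.FinitePresentation.ker_fG_of_surjective μ hμsurj
  obtain ⟨m, t, ht⟩ := Submodule.fg_iff_exists_fin_generating_family.mp hJfg
  have htJ : ∀ k, t k ∈ J := fun k => ht ▸ Submodule.subset_span ⟨k, rfl⟩
  unfold fittingIdeal0
  refine iSup_le fun n => iSup_le fun f => iSup_le fun hf => Ideal.span_le.mpr ?_
  rintro d ⟨P, hP, rfl⟩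
  set ω : Fin n → Ω[B⁄A] := fun j => f (Pi.single j 1) with hω
  choose y hy using fun j => J.toCotangent_surjective (ω j)
  have hfv : ∀ v : Fin n → B, f v = ∑ j, v j • ω j := by
    intro v
    have h : v = ∑ j, v j • (Pi.single j 1 : Fin n → B) := by
      funext i
      rw [Finset.sum_apply]
      simp [Pi.single_apply]
    conv_lhs => rw [h]
    rw [map_sum]
    simp [hω, map_smul]
  set z : (Fin n → B) → J := fun v => ∑ j, (algebraMap B R (v j)) • y j with hzdef
  have hz : ∀ v, J.toCotangent (z v) = f v := by
    intro v
    rw [hzdef, map_sum, hfv]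
    refine Finset.sum_congr rfl fun j _ => ?_
    rw [LinearMap.map_smul, hy]
    show (algebraMap B R (v j)) • (ω j : Ω[B⁄A]) = v j • ω j
    rw [algebraMap_smul]
  have hzcoe : ∀ v : Fin n → B, ((z v : J) : R) = ∑ j, algebraMap B R (v j) * (y j : R) := by
    intro v
    rw [hzdef]
    push_cast
    rfl
  -- writing elements of J² as J-combinations of the t k
  have key : ∀ x : R, x ∈ J ^ 2 →
      ∃ u : Fin m → R, (∀ k, u k ∈ J) ∧ x = ∑ k, u k * t k := by
    intro x hx
    have hx' : x ∈ J • Submodule.span R (Set.range t) := by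
      rw [ht]
      rw [pow_two] at hx
      exact hx
    obtain ⟨a, ha, hax⟩ := (Submodule.mem_ideal_smul_span_iff_exists_sum J t x).mp hx'
    refine ⟨fun k => a k, fun k => ha k, ?_⟩
    rw [← hax]
    rw [Finsupp.sum_fintype]
    · simp [smul_eq_mul]
    · exact fun k => zero_smul _ _
  -- relations from P
  have hPrel : ∀ i, ((z (P i) : J) : R) ∈ J ^ 2 := by
    intro i
    rw [← Ideal.toCotangent_eq_zero, hz]
    have := LinearMap.mem_ker.mp (hP i); exact this
  choose U hUJ hUt using fun i => key _ (hPrel i)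
  -- generation of J by the y's modulo J²
  choose c hc using fun k => hf (J.toCotangent ⟨t k, htJ k⟩)
  have hcrel : ∀ k, ((⟨t k, htJ k⟩ - z (c k) : J) : R) ∈ J ^ 2 := by
    intro k
    rw [← Ideal.toCotangent_eq_zero, map_sub, hz, hc, sub_self]
  choose V hVJ hVt using fun k => key _ (hcrel k)
  -- matrices
  set y' : Fin n → R := fun j => (y j : R) with hy'
  set P' : Matrix (Fin n) (Fin n) R := Matrix.of fun i j => algebraMap B R (P i j) with hP'
  set C' : Matrix (Fin m) (Fin n) R := Matrix.of fun k j => algebraMap B R (c k j) with hC'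
  set U' : Matrix (Fin n) (Fin m) R := Matrix.of U with hU'
  set V' : Matrix (Fin m) (Fin m) R := Matrix.of V with hV'
  have hPy : P'.mulVec y' = U'.mulVec t := by
    funext i
    show ∑ j, P' i j * y' j = ∑ k, U' i k * t k
    simp only [hP', hU', hy', Matrix.of_apply]
    rw [← hzcoe (P i), hUt i]
  have htE : (1 - V').mulVec t = C'.mulVec y' := by
    funext k
    show ∑ l, (1 - V') k l * t l = ∑ j, C' k j * y' j
    have h1 : ∑ l, (1 - V') k l * t l = t k - ∑ l, V' k l * t l := by
      simp only [Matrix.sub_apply, Matrix.one_apply, sub_mul, ite_mul, one_mul, zero_mul]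
      rw [Finset.sum_sub_distrib, Finset.sum_ite_eq (Finset.univ : Finset (Fin m)) k
        (fun l => t l)]
      simp
    rw [h1]
    have h2 : t k - ((z (c k) : J) : R) = ∑ l, V k l * t l := by
      have := hVt k
      simpa using this
    have h3 : t k - ∑ l, V' k l * t l = ((z (c k) : J) : R) := by
      rw [hV']
      show t k - ∑ l, V k l * t l = _
      rw [← h2]
      ring
    rw [h3, hzcoe]
    simp only [hC', hy', Matrix.of_apply]
  -- the determinant trick
  set E : Matrix (Fin m) (Fin m) R := 1 - V' with hE
  set M : Matrix (Fin n) (Fin n) R := E.det • P' - U' * (E.adjugate * C') with hM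
  set g : R := M.det * E.det with hg
  have hgt : ∀ k, g * t k = 0 := det_trick_ann y' t P' U' C' V' hPy htE
  -- g annihilates J
  have hgann : g ∈ (RingHom.ker (Algebra.TensorProduct.lmul' A : B ⊗[A] B →ₐ[A] B)).annihilator := by
    rw [Submodule.mem_annihilator]
    intro x hx
    have hx' : x ∈ Submodule.span R (Set.range t) := by rw [ht]; exact hx
    rw [smul_eq_mul]
    refine Submodule.span_induction (p := fun a _ => g * a = 0) ?_ ?_ ?_ ?_ hx'
    · rintro _ ⟨k, rfl⟩
      exact hgt k
    · exact mul_zero g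
    · intro a b _ _ ha hb
      rw [mul_add, ha, hb, add_zero]
    · intro r a _ ha
      rw [smul_eq_mul, mul_left_comm, ha, mul_zero]
  -- μ g = det P
  set ν : R →+* B := μ.toRingHom with hν
  have hVmu : ∀ k l, ν (V' k l) = 0 := fun k l => RingHom.mem_ker.mp (hVJ k l)
  have hUmu : ∀ i k, ν (U' i k) = 0 := fun i k => RingHom.mem_ker.mp (hUJ i k)
  have hEmu : ν.mapMatrix E = 1 := by
    ext k l
    rw [RingHom.mapMatrix_apply, Matrix.map_apply, hE, Matrix.sub_apply, map_sub, hVmu,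
      sub_zero]
    by_cases h : k = l
    · simp [h, Matrix.one_apply]
    · simp [h, Matrix.one_apply]
  have hEdetmu : ν E.det = 1 := by
    rw [RingHom.map_det, hEmu, Matrix.det_one]
  have hMmu : ν.mapMatrix M = P := by
    ext i j
    rw [RingHom.mapMatrix_apply, Matrix.map_apply, hM, Matrix.sub_apply, Matrix.smul_apply,
      smul_eq_mul, map_sub, map_mul, hEdetmu, one_mul]
    have h0 : ν ((U' * (E.adjugate * C')) i j) = 0 := by
      rw [Matrix.mul_apply, map_sum]
      refine Finset.sum_eq_zero fun k _ => ?_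
      rw [map_mul, hUmu, zero_mul]
    rw [h0, sub_zero, hP', Matrix.of_apply]
    exact hμab (P i j)
  have hgmu : μ g = P.det := by
    show ν g = P.det
    rw [hg, map_mul, hEdetmu, mul_one, RingHom.map_det, hMmu]
  exact hgmu ▸ Ideal.mem_map_of_mem _ hgann
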